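/- Let A be an m×n real matrix with singular values σ_1 ≥ σ_2 ≥ … ≥ σ_r (r = min(m,n)), and for 0 ≤ k < r let A_k = Σ_{j=1}^{k} σ_j u_j v_jᵀ be the truncation of a singular value decomposition A = Σ_{j=1}^{r} σ_j u_j v_jᵀ to its first k terms. Then ‖A − A_k‖ = σ_{k+1} in the spectral norm, and moreover for every m×n real matrix B with rank at most k one has ‖A − B‖ ≥ σ_{k+1}; that is, σ_{k+1} = inf{‖A − B‖ : rank(B) ≤ k} and the truncated SVD attains this infimum. -/

import Mathlib

open Matrix

section EckartYoungAux

lemma EY.sum_sq_ortho {p r : ℕ} (W : Matrix (Fin p) (Fin r) ℝ)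
    (h : ∀ j j', (∑ i, W i j * W i j') = if j = j' then (1:ℝ) else 0)
    (d : Fin r → ℝ) :
    ∑ i, (∑ j, d j * W i j)^2 = ∑ j, (d j)^2 := by
  have e1 : ∀ i : Fin p, (∑ j, d j * W i j)^2
      = ∑ j, ∑ j', (d j * W i j) * (d j' * W i j') := by
    intro i; rw [sq, Finset.sum_mul_sum]
  simp only [e1]
  rw [Finset.sum_comm]
  have e2 : ∀ j : Fin r, ∑ i, ∑ j', (d j * W i j) * (d j' * W i j')
      = ∑ j', (d j * d j') * ∑ i, W i j * W i j' := by
    intro j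
    rw [Finset.sum_comm]
    refine Finset.sum_congr rfl fun j' _ => ?_
    rw [Finset.mul_sum]
    refine Finset.sum_congr rfl fun i _ => ?_
    ring
  simp only [e2, h]
  refine Finset.sum_congr rfl fun j _ => ?_
  simp only [mul_ite, mul_one, mul_zero]
  rw [Finset.sum_ite_eq Finset.univ j (fun j' => d j * d j')]
  simp [sq]

lemma EY.bessel {p r : ℕ} (W : Matrix (Fin p) (Fin r) ℝ)
    (h : ∀ j j', (∑ i, W i j * W i j') = if j = j' then (1:ℝ) else 0)
    (x : Fin p → ℝ) :
    ∑ j, (∑ i, W i j * x i)^2 ≤ ∑ i, (x i)^2 := by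
  set c : Fin r → ℝ := fun j => ∑ i, W i j * x i with hc
  have h0 : (0:ℝ) ≤ ∑ i, (x i - ∑ j, c j * W i j)^2 :=
    Finset.sum_nonneg fun i _ => sq_nonneg _
  have e1 : ∑ i, (x i - ∑ j, c j * W i j)^2
      = ∑ i, (x i)^2 - 2 * ∑ i, x i * ∑ j, c j * W i j + ∑ i, (∑ j, c j * W i j)^2 := by
    rw [Finset.mul_sum, ← Finset.sum_sub_distrib, ← Finset.sum_add_distrib]
    exact Finset.sum_congr rfl fun i _ => by ring
  have e2 : ∑ i, x i * ∑ j, c j * W i j = ∑ j, (c j)^2 := by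
    have : ∀ i, x i * ∑ j, c j * W i j = ∑ j, c j * (W i j * x i) := by
      intro i; rw [Finset.mul_sum]; exact Finset.sum_congr rfl fun j _ => by ring
    simp only [this]
    rw [Finset.sum_comm]
    refine Finset.sum_congr rfl fun j _ => ?_
    rw [← Finset.mul_sum, hc, sq]
  have e3 : ∑ i, (∑ j, c j * W i j)^2 = ∑ j, (c j)^2 := EY.sum_sq_ortho W h c
  have h0' := h0
  rw [e1, e2, e3] at h0'
  linarith

lemma EY.svd_mulVec {m n r : ℕ} (U : Matrix (Fin m) (Fin r) ℝ) (V : Matrix (Fin n) (Fin r) ℝ)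
    (a : Fin r → ℝ) (x : Fin n → ℝ) (i : Fin m) :
    ((∑ j : Fin r, a j • Matrix.vecMulVec (fun i => U i j) (fun i' => V i' j)).mulVec x) i
      = ∑ j, (a j * ∑ i', V i' j * x i') * U i j := by
  rw [Matrix.mulVec, dotProduct]
  simp only [Matrix.sum_apply, Matrix.smul_apply, Matrix.vecMulVec_apply, smul_eq_mul,
    Finset.sum_mul]
  rw [Finset.sum_comm]
  refine Finset.sum_congr rfl fun j _ => ?_
  rw [Finset.mul_sum, Finset.sum_mul]
  exact Finset.sum_congr rfl fun i' _ => by ring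

end EckartYoungAux

/-- The spectral (operator) norm of a real matrix. -/
noncomputable def matrixSpectralNorm {m n : ℕ} (A : Matrix (Fin m) (Fin n) ℝ) : ℝ :=
  ‖LinearMap.toContinuousLinearMap (Matrix.toEuclideanLin A)‖

section NormAux

lemma EY.euclid_norm_eq {m n : ℕ} (M : Matrix (Fin m) (Fin n) ℝ)
    (x : EuclideanSpace ℝ (Fin n)) :
    ‖(LinearMap.toContinuousLinearMap (Matrix.toEuclideanLin M)) x‖
      = Real.sqrt (∑ i, (M.mulVec (fun i' => x i') i)^2) := by
  rw [LinearMap.coe_toContinuousLinearMap', EuclideanSpace.norm_eq]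
  congr 1
  refine Finset.sum_congr rfl fun i _ => ?_
  rw [Real.norm_eq_abs, sq_abs]
  rfl

lemma EY.euclid_norm_eq' {n : ℕ} (x : EuclideanSpace ℝ (Fin n)) :
    ‖x‖ = Real.sqrt (∑ i, (x i)^2) := by
  rw [EuclideanSpace.norm_eq]
  congr 1
  exact Finset.sum_congr rfl fun i _ => by rw [Real.norm_eq_abs, sq_abs]

lemma EY.spectralNorm_le_of {m n : ℕ} (M : Matrix (Fin m) (Fin n) ℝ) {c : ℝ} (hc : 0 ≤ c)
    (h : ∀ x : Fin n → ℝ, ∑ i, (M.mulVec x i)^2 ≤ c^2 * ∑ i, (x i)^2) :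
    matrixSpectralNorm M ≤ c := by
  refine ContinuousLinearMap.opNorm_le_bound _ hc fun x => ?_
  rw [EY.euclid_norm_eq, EY.euclid_norm_eq' x]
  calc Real.sqrt (∑ i, (M.mulVec (fun i' => x i') i)^2)
      ≤ Real.sqrt (c^2 * ∑ i, (x i)^2) := Real.sqrt_le_sqrt (h _)
    _ = c * Real.sqrt (∑ i, (x i)^2) := by
        rw [Real.sqrt_mul (sq_nonneg c), Real.sqrt_sq hc]

lemma EY.le_spectralNorm {m n : ℕ} (M : Matrix (Fin m) (Fin n) ℝ) (x : Fin n → ℝ) :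
    Real.sqrt (∑ i, (M.mulVec x i)^2) ≤ matrixSpectralNorm M * Real.sqrt (∑ i, (x i)^2) := by
  have h := (LinearMap.toContinuousLinearMap (Matrix.toEuclideanLin M)).le_opNorm
    ((WithLp.equiv 2 (Fin n → ℝ)).symm x)
  rw [EY.euclid_norm_eq, EY.euclid_norm_eq'] at h
  exact h

end NormAux

theorem eckart_young_spectral
    {m n k : ℕ} (A : Matrix (Fin m) (Fin n) ℝ)
    (U : Matrix (Fin m) (Fin (min m n)) ℝ) (V : Matrix (Fin n) (Fin (min m n)) ℝ)
    (σ : Fin (min m n) → ℝ)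
    (hU : Uᵀ * U = 1) (hV : Vᵀ * V = 1)
    (hσ0 : ∀ j, 0 ≤ σ j) (hσdec : Antitone σ)
    (hSVD : A = ∑ j : Fin (min m n),
      σ j • Matrix.vecMulVec (fun i => U i j) (fun i' => V i' j))
    (hk : k < min m n) :
    matrixSpectralNorm (A - ∑ j : Fin (min m n),
        (if (j : ℕ) < k then σ j else 0) •
          Matrix.vecMulVec (fun i => U i j) (fun i' => V i' j)) = σ ⟨k, hk⟩ ∧
    ∀ B : Matrix (Fin m) (Fin n) ℝ, B.rank ≤ k →
      σ ⟨k, hk⟩ ≤ matrixSpectralNorm (A - B) := by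
  -- orthonormality in summed form
  have hUo : ∀ j j' : Fin (min m n), (∑ i, U i j * U i j') = if j = j' then (1:ℝ) else 0 := by
    intro j j'
    have := congrFun (congrFun hU j) j'
    simpa [Matrix.mul_apply, Matrix.one_apply, Matrix.transpose_apply] using this
  have hVo : ∀ j j' : Fin (min m n), (∑ i, V i j * V i j') = if j = j' then (1:ℝ) else 0 := by
    intro j j'
    have := congrFun (congrFun hV j) j'
    simpa [Matrix.mul_apply, Matrix.one_apply, Matrix.transpose_apply] using this
  set τ : Fin (min m n) → ℝ := fun j => if (j:ℕ) < k then 0 else σ j with hτ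
  set κ : Fin (min m n) := ⟨k, hk⟩ with hκ
  -- residual matrix
  have hres : A - (∑ j : Fin (min m n),
      (if (j : ℕ) < k then σ j else 0) •
        Matrix.vecMulVec (fun i => U i j) (fun i' => V i' j))
    = ∑ j : Fin (min m n), τ j • Matrix.vecMulVec (fun i => U i j) (fun i' => V i' j) := by
    rw [hSVD, ← Finset.sum_sub_distrib]
    refine Finset.sum_congr rfl fun j _ => ?_
    rw [← sub_smul, hτ]
    congr 1
    by_cases h : (j:ℕ) < k <;> simp [h]
  rw [hres]
  have hσκ : 0 ≤ σ κ := hσ0 κ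
  constructor
  · -- Part 1
    apply le_antisymm
    · refine EY.spectralNorm_le_of _ hσκ fun x => ?_
      have hmv : ∀ i, ((∑ j : Fin (min m n), τ j • Matrix.vecMulVec (fun i => U i j)
          (fun i' => V i' j)).mulVec x) i
          = ∑ j, ((fun j => τ j * ∑ i', V i' j * x i') j) * U i j := fun i =>
        EY.svd_mulVec U V τ x i
      simp only [hmv]
      rw [EY.sum_sq_ortho U hUo]
      have hb : ∑ j, (∑ i', V i' j * x i')^2 ≤ ∑ i, (x i)^2 := EY.bessel V hVo x
      have hterm : ∀ j : Fin (min m n), (τ j * ∑ i', V i' j * x i')^2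
          ≤ (σ κ)^2 * (∑ i', V i' j * x i')^2 := by
        intro j
        rw [mul_pow]
        gcongr ?_ * _
        rw [hτ]
        by_cases h : (j:ℕ) < k
        · simp [h, sq_nonneg]
        · simp only [h, if_false]
          have hjk : κ ≤ j := by
            rw [hκ, Fin.le_def]
            exact Nat.le_of_not_lt h
          have := hσdec hjk
          have := hσ0 j
          nlinarith
      calc ∑ j, (τ j * ∑ i', V i' j * x i')^2
          ≤ ∑ j, (σ κ)^2 * (∑ i', V i' j * x i')^2 := Finset.sum_le_sum fun j _ => hterm j
        _ = (σ κ)^2 * ∑ j, (∑ i', V i' j * x i')^2 := by rw [Finset.mul_sum]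
        _ ≤ (σ κ)^2 * ∑ i, (x i)^2 := by
            exact mul_le_mul_of_nonneg_left hb (sq_nonneg _)
    · -- lower bound: apply to x = column κ of V
      set x : Fin n → ℝ := fun i => V i κ with hx
      have hc : ∀ j : Fin (min m n), (∑ i', V i' j * x i') = if j = κ then (1:ℝ) else 0 := by
        intro j; rw [hx]; exact hVo j κ
      have hmv : ∀ i, ((∑ j : Fin (min m n), τ j • Matrix.vecMulVec (fun i => U i j)
          (fun i' => V i' j)).mulVec x) i = σ κ * U i κ := by
        intro i
        rw [EY.svd_mulVec U V τ x i]
        simp only [hc, mul_ite, mul_one, mul_zero, ite_mul, zero_mul]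
        rw [Finset.sum_ite_eq' Finset.univ κ (fun j => τ j * U i j)]
        simp only [Finset.mem_univ, if_true]
        rw [hτ]
        simp [hκ]
      have h1 : ∑ i, (((∑ j : Fin (min m n), τ j • Matrix.vecMulVec (fun i => U i j)
          (fun i' => V i' j)).mulVec x) i)^2 = (σ κ)^2 := by
        simp only [hmv, mul_pow]
        rw [← Finset.mul_sum]
        have huu : ∑ i, (U i κ)^2 = 1 := by
          have h3 := hUo κ κ
          simp only [if_pos] at h3
          rw [← h3]
          exact Finset.sum_congr rfl fun i _ => by rw [sq]
        rw [huu, mul_one]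
      have h2 : ∑ i, (x i)^2 = 1 := by
        have h3 := hVo κ κ
        simp only [if_pos] at h3
        rw [← h3, hx]
        exact Finset.sum_congr rfl fun i _ => by rw [sq]
      have := EY.le_spectralNorm
        (∑ j : Fin (min m n), τ j • Matrix.vecMulVec (fun i => U i j) (fun i' => V i' j)) x
      rw [h1, h2, Real.sqrt_one, mul_one, Real.sqrt_sq hσκ] at this
      exact this
  · -- Part 2
    intro B hB
    have hk1 : k + 1 ≤ min m n := hk
    set emb : Fin (k+1) → Fin (min m n) := fun j => ⟨j, lt_of_lt_of_le j.isLt hk1⟩ with hemb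
    have hembinj : Function.Injective emb := by
      intro a b hab
      have h2 := congrArg Fin.val hab
      exact Fin.ext h2
    set V' : Matrix (Fin n) (Fin (k+1)) ℝ := fun i j => V i (emb j) with hV'
    set C : Matrix (Fin m) (Fin (k+1)) ℝ := B * V' with hC
    have hrankC : C.rank ≤ k := le_trans (Matrix.rank_mul_le_left B V') hB
    have hkerC : LinearMap.ker C.mulVecLin ≠ ⊥ := by
      intro hbot
      have hrn := LinearMap.finrank_range_add_finrank_ker C.mulVecLin
      rw [hbot, finrank_bot, Module.finrank_fintype_fun_eq_card, Fintype.card_fin] at hrn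
      have : C.rank = Module.finrank ℝ (LinearMap.range C.mulVecLin) := rfl
      omega
    obtain ⟨c, hcker, hc0⟩ := (Submodule.ne_bot_iff _).mp hkerC
    have hCc : C.mulVec c = 0 := hcker
    set x : Fin n → ℝ := V'.mulVec c with hxdef
    have hBx : B.mulVec x = 0 := by
      rw [hxdef, Matrix.mulVec_mulVec, ← hC]
      exact hCc
    have hABx : (A - B).mulVec x = A.mulVec x := by
      rw [Matrix.sub_mulVec, hBx, sub_zero]
    have hxi : ∀ i, x i = ∑ j', c j' * V i (emb j') := by
      intro i
      rw [hxdef, Matrix.mulVec, dotProduct]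
      exact Finset.sum_congr rfl fun j' _ => by rw [hV']; ring
    set d : Fin (min m n) → ℝ := fun j => if h : (j:ℕ) < k+1 then c ⟨j, h⟩ else 0 with hd
    have hcd : ∀ j : Fin (min m n), (∑ i', V i' j * x i') = d j := by
      intro j
      have e1 : ∑ i', V i' j * x i'
          = ∑ j', (if j = emb j' then (1:ℝ) else 0) * c j' := by
        simp only [hxi, Finset.mul_sum]
        rw [Finset.sum_comm]
        refine Finset.sum_congr rfl fun j' _ => ?_
        rw [← hVo j (emb j'), Finset.sum_mul]
        exact Finset.sum_congr rfl fun i' _ => by ring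
      rw [e1]
      simp only [hd]
      by_cases h : (j:ℕ) < k+1
      · rw [dif_pos h]
        rw [Finset.sum_eq_single ⟨(j:ℕ), h⟩]
        · have : j = emb ⟨(j:ℕ), h⟩ := Fin.ext rfl
          rw [if_pos this, one_mul]
        · intro b _ hb
          have : j ≠ emb b := by
            intro hjb
            apply hb
            apply hembinj
            rw [← hjb]
          rw [if_neg this, zero_mul]
        · intro hmem
          exact absurd (Finset.mem_univ _) hmem
      · rw [dif_neg h]
        apply Finset.sum_eq_zero
        intro j' _
        have : j ≠ emb j' := by
          intro hjb
          apply h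
          rw [hjb]
          exact j'.isLt
        rw [if_neg this, zero_mul]
    have hAx : ∀ i, A.mulVec x i = ∑ j, (σ j * d j) * U i j := by
      intro i
      rw [hSVD, EY.svd_mulVec U V σ x i]
      exact Finset.sum_congr rfl fun j _ => by rw [hcd j]
    have h1 : ∑ i, (A.mulVec x i)^2 = ∑ j, (σ j * d j)^2 := by
      simp only [hAx]
      exact EY.sum_sq_ortho U hUo _
    have hV'o : ∀ a b : Fin (k+1), (∑ i, V' i a * V' i b) = if a = b then (1:ℝ) else 0 := by
      intro a b
      rw [hV']
      have := hVo (emb a) (emb b)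
      rw [this]
      by_cases hab : a = b
      · rw [if_pos hab, if_pos (congrArg emb hab)]
      · rw [if_neg hab, if_neg fun h => hab (hembinj h)]
    have h2 : ∑ i, (x i)^2 = ∑ j', (c j')^2 := by
      simp only [hxi]
      exact EY.sum_sq_ortho V' hV'o c
    have hde : ∀ j' : Fin (k+1), d (emb j') = c j' := by
      intro j'
      simp only [hd]
      have h : ((emb j' : Fin (min m n)) : ℕ) < k + 1 := j'.isLt
      rw [dif_pos h]
    have h3 : (σ κ)^2 * ∑ j', (c j')^2 ≤ ∑ j, (σ j * d j)^2 := by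
      have step1 : ∑ j', (c j')^2 ≤ ∑ j, (d j)^2 := by
        have e : ∑ j', (c j')^2 = ∑ j ∈ Finset.univ.image emb, (d j)^2 := by
          rw [Finset.sum_image (fun a _ b _ h => hembinj h)]
          exact Finset.sum_congr rfl fun j' _ => by rw [hde j']
        rw [e]
        exact Finset.sum_le_sum_of_subset_of_nonneg (Finset.subset_univ _)
          (fun j _ _ => sq_nonneg _)
      have step2 : ∀ j : Fin (min m n), (σ κ)^2 * (d j)^2 ≤ (σ j * d j)^2 := by
        intro j
        by_cases h : (j:ℕ) < k+1
        · have hjκ : j ≤ κ := by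
            rw [hκ, Fin.le_def]
            exact Nat.lt_succ_iff.mp h
          have hσj := hσdec hjκ
          rw [mul_pow]
          exact mul_le_mul_of_nonneg_right (pow_le_pow_left₀ hσκ hσj 2) (sq_nonneg _)
        · have : d j = 0 := by simp only [hd]; exact dif_neg h
          rw [this]
          simp
      calc (σ κ)^2 * ∑ j', (c j')^2 ≤ (σ κ)^2 * ∑ j, (d j)^2 :=
            mul_le_mul_of_nonneg_left step1 (sq_nonneg _)
        _ = ∑ j, (σ κ)^2 * (d j)^2 := Finset.mul_sum _ _ _
        _ ≤ ∑ j, (σ j * d j)^2 := Finset.sum_le_sum fun j _ => step2 j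
    -- positivity of ‖x‖
    have hc0' : ∃ j₀, c j₀ ≠ 0 := Function.ne_iff.mp hc0
    obtain ⟨j₀, hj₀⟩ := hc0'
    have hxpos : 0 < ∑ j', (c j')^2 :=
      Finset.sum_pos' (fun j' _ => sq_nonneg _)
        ⟨j₀, Finset.mem_univ _, by positivity⟩
    have htpos : 0 < Real.sqrt (∑ i, (x i)^2) := by
      rw [h2]
      exact Real.sqrt_pos.mpr hxpos
    have hup := EY.le_spectralNorm (A - B) x
    have hABx' : ∀ i, (A - B).mulVec x i = A.mulVec x i := fun i => by rw [hABx]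
    rw [show (∑ i, ((A - B).mulVec x i)^2) = ∑ i, (A.mulVec x i)^2 from
      Finset.sum_congr rfl fun i _ => by rw [hABx' i]] at hup
    have hlow : σ κ * Real.sqrt (∑ i, (x i)^2) ≤ Real.sqrt (∑ i, (A.mulVec x i)^2) := by
      rw [← Real.sqrt_sq hσκ, ← Real.sqrt_mul (sq_nonneg _)]
      apply Real.sqrt_le_sqrt
      rw [h1, h2]
      exact h3
    have hfin : σ κ * Real.sqrt (∑ i, (x i)^2)
        ≤ matrixSpectralNorm (A - B) * Real.sqrt (∑ i, (x i)^2) := le_trans hlow hup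
    exact le_of_mul_le_mul_right hfin htpos
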